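/- Consider the linear ODE system on ℝⁿ in triangular form: for each j, xⱼ' = Pⱼ(x) where Pⱼ depends linearly on the coordinates of weight wⱼ and polynomially only on coordinates of weight strictly less than wⱼ. Then every maximal solution of this system is defined on all of ℝ; i.e., a weighted-homogeneous polynomial vector field of nonholonomic degree 0 is complete. -/

import Mathlib

/-- Polynomial vector fields on ℝⁿ: an `n`-tuple of polynomial coefficients. -/
noncomputable def bracketVF {n : ℕ} (X Y : Fin n → MvPolynomial (Fin n) ℝ) :
    Fin n → MvPolynomial (Fin n) ℝ :=
  fun j => ∑ k : Fin n,
    (X k * MvPolynomial.pderiv k (Y j) - Y k * MvPolynomial.pderiv k (X j))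

/-- `X` is weighted-homogeneous of nonholonomic degree `s` for the weights `w`:
each coefficient `X j` is weighted-homogeneous of weighted degree `w j + s`. -/
def IsWHomVF {n : ℕ} (w : Fin n → ℕ) (s : ℤ)
    (X : Fin n → MvPolynomial (Fin n) ℝ) : Prop :=
  ∀ j, MvPolynomial.IsWeightedHomogeneous (fun i => (w i : ℤ)) (X j) ((w j : ℤ) + s)

open MvPolynomial Finsupp NormedSpace Set

namespace Stmt7

variable {n : ℕ} (w : Fin n → ℕ) (X : Fin n → MvPolynomial (Fin n) ℝ)

/-- degree bound -/
def B : ℕ := ∑ i, w i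

lemma wle (j : Fin n) : w j ≤ B w :=
  Finset.single_le_sum (fun i _ => Nat.zero_le _) (Finset.mem_univ j)

abbrev Idx (w : Fin n → ℕ) : Type := Fin n → Fin (B w + 1)

noncomputable def fsp (v : Idx w) : Fin n →₀ ℕ := Finsupp.equivFunOnFinite.symm fun i => (v i : ℕ)

lemma fsp_apply (v : Idx w) (i : Fin n) : fsp w v i = (v i : ℕ) := rfl

lemma fsp_inj : Function.Injective (fsp w) := by
  intro a b h
  funext i
  have h2 : (fun i => ((a i : ℕ))) = (fun i => ((b i : ℕ))) :=
    Finsupp.equivFunOnFinite.symm.injective h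
  exact Fin.ext (congrFun h2 i)

/-- cast of weights -/
lemma weight_cast (α : Fin n →₀ ℕ) :
    Finsupp.weight (fun i => (w i : ℤ)) α = ((Finsupp.weight w α : ℕ) : ℤ) := by
  rw [Finsupp.weight_apply, Finsupp.weight_apply, Finsupp.sum, Finsupp.sum]
  push_cast
  rfl

lemma hom_cast {p : MvPolynomial (Fin n) ℝ} {d : ℕ}
    (h : IsWeightedHomogeneous (fun i => (w i : ℤ)) p (d : ℤ)) :
    IsWeightedHomogeneous w p d := by
  intro α hα
  have := h hα
  rw [weight_cast] at this
  exact_mod_cast this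

lemma hom_cast' {p : MvPolynomial (Fin n) ℝ} {d : ℕ}
    (h : IsWeightedHomogeneous w p d) :
    IsWeightedHomogeneous (fun i => (w i : ℤ)) p (d : ℤ) := by
  intro α hα
  rw [weight_cast, h hα]

lemma weight_single (k : Fin n) :
    Finsupp.weight (fun i => (w i : ℤ)) (Finsupp.single k 1) = (w k : ℤ) := by
  rw [Finsupp.weight_apply, Finsupp.sum_single_index] <;> simp

lemma sub_add_single {α : Fin n →₀ ℕ} {k : Fin n} (hk : α k ≠ 0) :
    (α - Finsupp.single k 1) + Finsupp.single k 1 = α := by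
  ext i
  by_cases hik : i = k
  · subst hik
    simp [Finsupp.single_apply, Nat.sub_add_cancel (Nat.one_le_iff_ne_zero.2 hk)]
  · simp [Finsupp.single_apply, Ne.symm hik, hik]

lemma weight_sub_single {α : Fin n →₀ ℕ} {k : Fin n} (hk : α k ≠ 0) :
    Finsupp.weight (fun i => (w i : ℤ)) (α - Finsupp.single k 1)
      = Finsupp.weight (fun i => (w i : ℤ)) α - w k := by
  have h := congrArg (Finsupp.weight (fun i => (w i : ℤ))) (sub_add_single (α := α) hk)
  rw [map_add, weight_single] at h
  omega

lemma pderiv_hom {p : MvPolynomial (Fin n) ℝ} {d : ℤ} (k : Fin n)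
    (hp : IsWeightedHomogeneous (fun i => (w i : ℤ)) p d) :
    IsWeightedHomogeneous (fun i => (w i : ℤ)) (pderiv k p) (d - w k) := by
  have hrw : pderiv k p
      = ∑ α ∈ p.support, monomial (α - Finsupp.single k 1) (coeff α p * α k) := by
    conv_lhs => rw [as_sum p]
    rw [map_sum]
    simp only [pderiv_monomial]
  rw [hrw]
  refine IsWeightedHomogeneous.sum (M := ℤ) p.support _ (d - w k) (fun α hα => ?_)
  by_cases hk : α k = 0
  · rw [hk]
    simp only [Nat.cast_zero, mul_zero, map_zero]
    exact isWeightedHomogeneous_zero ℝ _ _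
  · refine isWeightedHomogeneous_monomial _ _ _ ?_
    rw [weight_sub_single w hk, hp (MvPolynomial.mem_support_iff.1 hα)]


/-- abbreviation for the homogeneity assumption -/
def IsWHomVF' (w : Fin n → ℕ) (X : Fin n → MvPolynomial (Fin n) ℝ) : Prop :=
  ∀ j, IsWeightedHomogeneous (fun i => (w i : ℤ)) (X j) (w j : ℤ)

/-- The derivation `p ↦ ∑ k, X k * ∂ₖ p` as a linear map. -/
noncomputable def DL : MvPolynomial (Fin n) ℝ →ₗ[ℝ] MvPolynomial (Fin n) ℝ :=
  ∑ k : Fin n, (LinearMap.mulLeft ℝ (X k)).comp (pderiv k).toLinearMap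

lemma DL_apply (p : MvPolynomial (Fin n) ℝ) :
    DL X p = ∑ k : Fin n, X k * pderiv k p := by
  simp [DL]

lemma DL_leibniz (p q : MvPolynomial (Fin n) ℝ) :
    DL X (p * q) = DL X p * q + p * DL X q := by
  simp only [DL_apply, pderiv_mul, mul_add, Finset.sum_add_distrib, Finset.mul_sum,
    Finset.sum_mul]
  congr 1
  · exact Finset.sum_congr rfl fun k _ => by ring
  · exact Finset.sum_congr rfl fun k _ => by ring

lemma DL_hom (hX : IsWHomVF' w X) {p : MvPolynomial (Fin n) ℝ} {d : ℤ}
    (hp : IsWeightedHomogeneous (fun i => (w i : ℤ)) p d) :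
    IsWeightedHomogeneous (fun i => (w i : ℤ)) (DL X p) d := by
  rw [DL_apply]
  refine IsWeightedHomogeneous.sum (M := ℤ) Finset.univ _ d (fun k _ => ?_)
  have h := (hX k).mul (pderiv_hom w k hp)
  have e : (w k : ℤ) + (d - w k) = d := by ring
  rwa [e] at h

/-- coefficient extraction -/
noncomputable def piL : MvPolynomial (Fin n) ℝ →ₗ[ℝ] (Idx w → ℝ) where
  toFun p := fun v => coeff (fsp w v) p
  map_add' p q := by funext v; simp [coeff_add]
  map_smul' c p := by funext v; simp [coeff_smul]

/-- reconstruction -/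
noncomputable def iota : (Idx w → ℝ) →ₗ[ℝ] MvPolynomial (Fin n) ℝ where
  toFun y := ∑ v : Idx w, y v • (monomial (fsp w v) (1 : ℝ))
  map_add' y z := by simp [add_smul, Finset.sum_add_distrib]
  map_smul' c y := by simp [Finset.smul_sum, smul_smul]

lemma coeff_iota (y : Idx w → ℝ) (β : Fin n →₀ ℕ) :
    coeff β (iota w y) = ∑ v : Idx w, (if fsp w v = β then y v else 0) := by
  simp only [iota, LinearMap.coe_mk, AddHom.coe_mk, coeff_sum, coeff_smul, coeff_monomial,
    smul_eq_mul]
  exact Finset.sum_congr rfl fun v _ => by split <;> simp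

lemma pi_iota (y : Idx w → ℝ) : piL w (iota w y) = y := by
  funext v
  show coeff (fsp w v) (iota w y) = y v
  rw [coeff_iota]
  rw [Finset.sum_eq_single v]
  · simp
  · intro u _ huv
    simp only [ite_eq_right_iff]
    exact fun h => absurd (fsp_inj w h) huv
  · simp

/-- bounded exponents -/
def Bdd (p : MvPolynomial (Fin n) ℝ) : Prop :=
  ∀ α ∈ p.support, ∀ i, α i ≤ B w

lemma iota_pi {p : MvPolynomial (Fin n) ℝ} (hp : Bdd w p) : iota w (piL w p) = p := by
  apply MvPolynomial.ext
  intro β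
  rw [coeff_iota]
  by_cases hβ : ∀ i, β i ≤ B w
  · set v : Idx w := fun i => ⟨β i, Nat.lt_succ_of_le (hβ i)⟩ with hv
    have hfv : fsp w v = β := by
      ext i
      rfl
    rw [Finset.sum_eq_single v]
    · simp [hfv, piL]
    · intro u _ huv
      have : fsp w u ≠ β := fun h => huv (by rw [← hfv] at h; exact fsp_inj w h)
      simp [this]
    · simp
  · have h0 : coeff β p = 0 := by
      by_contra hc
      exact hβ (hp β (MvPolynomial.mem_support_iff.2 hc))
    rw [h0]
    refine Finset.sum_eq_zero fun u _ => ?_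
    have : fsp w u ≠ β := by
      intro h
      apply hβ
      intro i
      rw [← h]
      exact Nat.lt_succ_iff.1 (u i).isLt
    simp [this]

lemma hom_bdd (hw : ∀ i, 1 ≤ w i) {p : MvPolynomial (Fin n) ℝ} {d : ℕ}
    (hp : IsWeightedHomogeneous w p d) (hd : d ≤ B w) : Bdd w p := by
  intro α hα i
  have hwt : Finsupp.weight w α = d := hp (MvPolynomial.mem_support_iff.1 hα)
  by_cases h0 : α i = 0
  · omega
  · have hmem : i ∈ α.support := Finsupp.mem_support_iff.2 h0
    have hterm : α i * w i ≤ Finsupp.weight w α := by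
      rw [Finsupp.weight_apply, Finsupp.sum]
      have h2 := Finset.single_le_sum (f := fun j => α j • w j)
        (fun j _ => Nat.zero_le _) hmem
      simpa [smul_eq_mul] using h2
    have := hw i
    nlinarith

lemma bdd_iota (y : Idx w → ℝ) : Bdd w (iota w y) := by
  intro α hα i
  have hc : coeff α (iota w y) ≠ 0 := MvPolynomial.mem_support_iff.1 hα
  rw [coeff_iota] at hc
  obtain ⟨v, -, hv⟩ := Finset.exists_ne_zero_of_sum_ne_zero hc
  have hfv : fsp w v = α := by
    by_contra h
    simp [h] at hv
  rw [← hfv]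
  exact Nat.lt_succ_iff.1 (v i).isLt

lemma bdd_whc {p : MvPolynomial (Fin n) ℝ} (hp : Bdd w p) (d : ℕ) :
    Bdd w (weightedHomogeneousComponent w d p) := by
  intro α hα
  have hc := MvPolynomial.mem_support_iff.1 hα
  classical
  rw [coeff_weightedHomogeneousComponent] at hc
  by_cases h : Finsupp.weight w α = d
  · rw [if_pos h] at hc
    exact hp α (MvPolynomial.mem_support_iff.2 hc)
  · rw [if_neg h] at hc
    exact absurd rfl hc

lemma whc_monomial (d : ℕ) (α : Fin n →₀ ℕ) (c : ℝ) :
    weightedHomogeneousComponent w d (monomial α c)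
      = if Finsupp.weight w α = d then monomial α c else 0 := by
  classical
  ext β
  rw [coeff_weightedHomogeneousComponent, coeff_monomial]
  by_cases hab : α = β
  · subst hab
    by_cases h : Finsupp.weight w α = d <;> simp [h, coeff_monomial]
  · rw [if_neg hab]
    split_ifs <;> simp [coeff_monomial, hab]

lemma DL_hom_nat (hX : IsWHomVF' w X) {p : MvPolynomial (Fin n) ℝ} {d : ℕ}
    (hp : IsWeightedHomogeneous w p d) : IsWeightedHomogeneous w (DL X p) d :=
  hom_cast w (DL_hom w X hX (hom_cast' w hp))

lemma DL_whc (hX : IsWHomVF' w X) (d : ℕ) (p : MvPolynomial (Fin n) ℝ) :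
    DL X (weightedHomogeneousComponent w d p)
      = weightedHomogeneousComponent w d (DL X p) := by
  conv_lhs => rw [as_sum p]
  conv_rhs => rw [as_sum p]
  simp only [map_sum]
  refine Finset.sum_congr rfl fun α hα => ?_
  rw [whc_monomial]
  have hmon : IsWeightedHomogeneous w (monomial α (coeff α p)) (Finsupp.weight w α) :=
    isWeightedHomogeneous_monomial _ _ _ rfl
  have hDmon := DL_hom_nat w X hX hmon
  by_cases h : Finsupp.weight w α = d
  · rw [if_pos h, ← h]
    exact (weightedHomogeneousComponent_eq_self hDmon).symm
  · rw [if_neg h, map_zero]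
    exact (weightedHomogeneousComponent_eq_zero' _ _ fun e he => by
      rw [hDmon (MvPolynomial.mem_support_iff.1 he)]; exact h).symm

section Analytic

/-- The compression of `DL` to the finite-dimensional space. -/
noncomputable def Mc : (Idx w → ℝ) →L[ℝ] (Idx w → ℝ) :=
  LinearMap.toContinuousLinearMap ((piL w).comp ((DL X).comp (iota w)))

lemma Mc_apply (y : Idx w → ℝ) : Mc w X y = piL w (DL X (iota w y)) := rfl

lemma Mc_pi {p : MvPolynomial (Fin n) ℝ} (hp : Bdd w p) :
    Mc w X (piL w p) = piL w (DL X p) := by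
  rw [Mc_apply, iota_pi w hp]

/-- global uniqueness for linear ODEs -/
lemma ode_uniq {F : Type*} [NormedAddCommGroup F] [NormedSpace ℝ F] (A : F →L[ℝ] F)
    (f g : ℝ → F) (hf : ∀ t, HasDerivAt f (A (f t)) t) (hg : ∀ t, HasDerivAt g (A (g t)) t)
    (h0 : f 0 = g 0) (t : ℝ) : f t = g t := by
  have habs : -(|t| + 1) < t ∧ t < |t| + 1 := by
    constructor <;> cases abs_cases t <;> linarith [abs_nonneg t]
  have h := ODE_solution_unique_of_mem_Icc (v := fun _ y => A y) (s := fun _ => univ)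
    (K := ‖A‖₊) (fun _ _ => LipschitzWith.lipschitzOnWith A.lipschitz (s := univ))
    (t₀ := 0) (a := -(|t| + 1)) (b := |t| + 1)
    (by constructor <;> [linarith [abs_nonneg t]; linarith [abs_nonneg t]])
    (Continuous.continuousOn (by
      exact continuous_iff_continuousAt.2 fun s => (hf s).continuousAt))
    (fun s _ => hf s) (fun _ _ => mem_univ _)
    (Continuous.continuousOn (by
      exact continuous_iff_continuousAt.2 fun s => (hg s).continuousAt))
    (fun s _ => hg s) (fun _ _ => mem_univ _) h0
  exact h ⟨le_of_lt habs.1, le_of_lt habs.2⟩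

/-- The flow. -/
noncomputable def Phi (t : ℝ) : (Idx w → ℝ) →L[ℝ] (Idx w → ℝ) :=
  NormedSpace.exp (t • Mc w X)

lemma Phi_zero (z : Idx w → ℝ) : Phi w X 0 z = z := by
  simp [Phi, NormedSpace.exp_zero]

lemma hasDerivAt_Phi (z : Idx w → ℝ) (t : ℝ) :
    HasDerivAt (fun u => Phi w X u z) (Phi w X t (Mc w X z)) t := by
  have h := (hasDerivAt_exp_smul_const (𝕂 := ℝ) (Mc w X) t).clm_apply
    (hasDerivAt_const t z)
  simpa [Phi, ContinuousLinearMap.mul_apply] using h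

lemma hasDerivAt_Phi' (z : Idx w → ℝ) (t : ℝ) :
    HasDerivAt (fun u => Phi w X u z) (Mc w X (Phi w X t z)) t := by
  have h := (hasDerivAt_exp_smul_const' (𝕂 := ℝ) (Mc w X) t).clm_apply
    (hasDerivAt_const t z)
  simpa [Phi, ContinuousLinearMap.mul_apply] using h

/-- the solution curve in polynomial form -/
noncomputable def sol (p : MvPolynomial (Fin n) ℝ) (t : ℝ) : MvPolynomial (Fin n) ℝ :=
  iota w (Phi w X t (piL w p))

lemma sol_zero {p : MvPolynomial (Fin n) ℝ} (hp : Bdd w p) : sol w X p 0 = p := by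
  rw [sol, Phi_zero, iota_pi w hp]

/-- projection onto the weight-`d` part -/
noncomputable def Qc (d : ℕ) : (Idx w → ℝ) →L[ℝ] (Idx w → ℝ) :=
  LinearMap.toContinuousLinearMap
    ((piL w).comp ((weightedHomogeneousComponent w d).comp (iota w)))

lemma Qc_apply (d : ℕ) (y : Idx w → ℝ) :
    Qc w d y = piL w (weightedHomogeneousComponent w d (iota w y)) := rfl

lemma Qc_Mc_comm (hX : IsWHomVF' w X) (d : ℕ) (y : Idx w → ℝ) :
    Qc w d (Mc w X y) = Mc w X (Qc w d y) := by
  rw [Qc_apply, Mc_apply, Mc_apply, Qc_apply]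
  rw [iota_pi w (bdd_whc w (bdd_iota w y) d)]
  rw [DL_whc w X hX]
  set r := DL X (iota w y) with hr
  funext v
  show coeff (fsp w v) (weightedHomogeneousComponent w d (iota w (piL w r)))
      = coeff (fsp w v) (weightedHomogeneousComponent w d r)
  classical
  rw [coeff_weightedHomogeneousComponent, coeff_weightedHomogeneousComponent]
  have hc : coeff (fsp w v) (iota w (piL w r)) = coeff (fsp w v) r :=
    congrFun (pi_iota w (piL w r)) v
  rw [hc]

lemma sol_hom (hw : ∀ i, 1 ≤ w i) (hX : IsWHomVF' w X) {p : MvPolynomial (Fin n) ℝ} {d : ℕ}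
    (hp : IsWeightedHomogeneous w p d) (hd : d ≤ B w) (t : ℝ) :
    IsWeightedHomogeneous w (sol w X p t) d := by
  have hQ : Qc w d (Phi w X t (piL w p)) = Phi w X t (piL w p) := by
    refine ode_uniq (Mc w X) (fun u => Qc w d (Phi w X u (piL w p)))
      (fun u => Phi w X u (piL w p)) ?_ (fun u => hasDerivAt_Phi' w X _ u) ?_ t
    · intro u
      have h1 : HasDerivAt (fun u => Qc w d (Phi w X u (piL w p)))
          (Qc w d (Mc w X (Phi w X u (piL w p)))) u :=
        by exact (Qc w d).hasFDerivAt.comp_hasDerivAt u (hasDerivAt_Phi' w X _ u)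
      rwa [Qc_Mc_comm w X hX] at h1
    · show Qc w d (Phi w X 0 (piL w p)) = Phi w X 0 (piL w p)
      rw [Phi_zero, Qc_apply, iota_pi w (hom_bdd w hw hp hd),
        weightedHomogeneousComponent_eq_self hp]
  rw [Qc_apply] at hQ
  have hs : sol w X p t
      = weightedHomogeneousComponent w d (iota w (Phi w X t (piL w p))) := by
    rw [sol]
    conv_lhs => rw [← hQ]
    rw [iota_pi w (bdd_whc w (bdd_iota w _) d)]
  rw [hs]
  exact weightedHomogeneousComponent_isWeightedHomogeneous d _

lemma bdd_one : Bdd w (1 : MvPolynomial (Fin n) ℝ) := by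
  intro α hα i
  have h := MvPolynomial.mem_support_iff.1 hα
  by_cases h0 : α = 0
  · simp [h0]
  · rw [MvPolynomial.coeff_one, if_neg (fun hc => h0 hc.symm)] at h
    exact absurd rfl h

lemma sol_one (t : ℝ) : sol w X 1 t = 1 := by
  have hM : Mc w X (piL w 1) = 0 := by
    rw [Mc_apply, iota_pi w (bdd_one w)]
    have hD : DL X (1 : MvPolynomial (Fin n) ℝ) = 0 := by
      rw [DL_apply]
      simp [pderiv_one]
    rw [hD, map_zero]
  have h := ode_uniq (Mc w X) (fun u => Phi w X u (piL w 1)) (fun _ => piL w 1)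
    (fun u => hasDerivAt_Phi' w X _ u)
    (fun u => by simpa [hM] using hasDerivAt_const u (piL w 1))
    (by show Phi w X 0 (piL w 1) = piL w 1; rw [Phi_zero]) t
  rw [sol, h, iota_pi w (bdd_one w)]

/-- multiplication compressed to the finite-dimensional space, as bilinear map -/
noncomputable def bilL : (Idx w → ℝ) →ₗ[ℝ] (Idx w → ℝ) →ₗ[ℝ] (Idx w → ℝ) :=
  LinearMap.mk₂ ℝ (fun y z => piL w (iota w y * iota w z))
    (fun y y' z => by
      show piL w (iota w (y + y') * iota w z)
          = piL w (iota w y * iota w z) + piL w (iota w y' * iota w z)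
      rw [map_add, add_mul, map_add])
    (fun c y z => by
      show piL w (iota w (c • y) * iota w z) = c • piL w (iota w y * iota w z)
      rw [map_smul, smul_mul_assoc, map_smul])
    (fun y z z' => by
      show piL w (iota w y * iota w (z + z'))
          = piL w (iota w y * iota w z) + piL w (iota w y * iota w z')
      rw [map_add, mul_add, map_add])
    (fun c y z => by
      show piL w (iota w y * iota w (c • z)) = c • piL w (iota w y * iota w z)
      rw [map_smul, mul_smul_comm, map_smul])

noncomputable def bilC : (Idx w → ℝ) →L[ℝ] (Idx w → ℝ) →L[ℝ] (Idx w → ℝ) :=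
  LinearMap.toContinuousLinearMap
    ((LinearMap.toContinuousLinearMap :
        ((Idx w → ℝ) →ₗ[ℝ] (Idx w → ℝ)) ≃ₗ[ℝ] ((Idx w → ℝ) →L[ℝ] (Idx w → ℝ))).toLinearMap.comp
      (bilL w))

lemma bilC_apply (y z : Idx w → ℝ) : bilC w y z = piL w (iota w y * iota w z) := rfl

lemma sol_mul (hw : ∀ i, 1 ≤ w i) (hX : IsWHomVF' w X)
    {p q : MvPolynomial (Fin n) ℝ} {a b : ℕ}
    (hp : IsWeightedHomogeneous w p a) (hq : IsWeightedHomogeneous w q b)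
    (hab : a + b ≤ B w) (t : ℝ) :
    sol w X (p * q) t = sol w X p t * sol w X q t := by
  have ha : a ≤ B w := le_trans (Nat.le_add_right a b) hab
  have hb : b ≤ B w := le_trans (Nat.le_add_left b a) hab
  have key : piL w (sol w X p t * sol w X q t) = Phi w X t (piL w (p * q)) := by
    refine ode_uniq (Mc w X) (fun s => piL w (sol w X p s * sol w X q s))
      (fun s => Phi w X s (piL w (p * q))) ?_ (fun u => hasDerivAt_Phi' w X _ u) ?_ t
    · intro u
      have hu := hasDerivAt_Phi' w X (piL w p) u
      have hv := hasDerivAt_Phi' w X (piL w q) u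
      have h1 : HasDerivAt (fun s => bilC w (Phi w X s (piL w p)))
          (bilC w (Mc w X (Phi w X u (piL w p)))) u :=
        by exact (bilC w).hasFDerivAt.comp_hasDerivAt u hu
      have hF := h1.clm_apply hv
      have hsp := sol_hom w X hw hX hp ha u
      have hsq := sol_hom w X hw hX hq hb u
      have h2 : iota w (Mc w X (Phi w X u (piL w p))) = DL X (sol w X p u) := by
        rw [Mc_apply]
        exact iota_pi w (hom_bdd w hw (DL_hom_nat w X hX hsp) ha)
      have h3 : iota w (Mc w X (Phi w X u (piL w q))) = DL X (sol w X q u) := by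
        rw [Mc_apply]
        exact iota_pi w (hom_bdd w hw (DL_hom_nat w X hX hsq) hb)
      have e : bilC w (Mc w X (Phi w X u (piL w p))) (Phi w X u (piL w q))
            + bilC w (Phi w X u (piL w p)) (Mc w X (Phi w X u (piL w q)))
          = Mc w X (piL w (sol w X p u * sol w X q u)) := by
        rw [bilC_apply, bilC_apply, h2, h3]
        have h4 : iota w (Phi w X u (piL w p)) = sol w X p u := rfl
        have h5 : iota w (Phi w X u (piL w q)) = sol w X q u := rfl
        rw [h4, h5, Mc_apply,
          iota_pi w (hom_bdd w hw (hsp.mul hsq) hab), ← map_add, ← DL_leibniz]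
      rw [e] at hF
      exact hF
    · show piL w (sol w X p 0 * sol w X q 0) = Phi w X 0 (piL w (p * q))
      rw [Phi_zero, sol_zero w X (hom_bdd w hw hp ha), sol_zero w X (hom_bdd w hw hq hb)]
  have hprod : IsWeightedHomogeneous w (sol w X p t * sol w X q t) (a + b) :=
    (sol_hom w X hw hX hp ha t).mul (sol_hom w X hw hX hq hb t)
  rw [sol, ← key, iota_pi w (hom_bdd w hw hprod hab)]

end Analytic

section Final

lemma weight_single_nat (k : Fin n) : Finsupp.weight w (Finsupp.single k 1) = w k := by
  rw [Finsupp.weight_apply, Finsupp.sum_single_index] <;> simp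

/-- evaluation of the reconstructed polynomial, as continuous linear functional -/
noncomputable def evC (x0 : Fin n → ℝ) : (Idx w → ℝ) →L[ℝ] ℝ :=
  LinearMap.toContinuousLinearMap
    { toFun := fun y => MvPolynomial.eval x0 (iota w y)
      map_add' := fun y z => by
        show MvPolynomial.eval x0 (iota w (y + z)) = _
        rw [map_add, map_add]
      map_smul' := fun c y => by
        show MvPolynomial.eval x0 (iota w (c • y)) = c • MvPolynomial.eval x0 (iota w y)
        rw [map_smul, smul_eval, smul_eq_mul] }

lemma evC_apply (x0 : Fin n → ℝ) (y : Idx w → ℝ) :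
    evC w x0 y = MvPolynomial.eval x0 (iota w y) := rfl

lemma X_hom (j : Fin n) :
    IsWeightedHomogeneous w (MvPolynomial.X j : MvPolynomial (Fin n) ℝ) (w j) :=
  isWeightedHomogeneous_X _ _ _

lemma DL_X (j : Fin n) : DL X (MvPolynomial.X j) = X j := by
  rw [DL_apply, Finset.sum_eq_single j]
  · rw [pderiv_X_self, mul_one]
  · intro k _ hkj
    rw [pderiv_X_of_ne (Ne.symm hkj), mul_zero]
  · intro h
    exact absurd (Finset.mem_univ j) h

/-- the candidate solution -/
noncomputable def fsol (x0 : Fin n → ℝ) (t : ℝ) (j : Fin n) : ℝ :=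
  MvPolynomial.eval x0 (sol w X (MvPolynomial.X j) t)

lemma hasDerivAt_fsol (hw : ∀ i, 1 ≤ w i) (x0 : Fin n → ℝ) (t : ℝ) (j : Fin n) :
    HasDerivAt (fun u => fsol w X x0 u j)
      (MvPolynomial.eval x0 (sol w X (X j) t)) t := by
  have h := (evC w x0).hasFDerivAt.comp_hasDerivAt t
    (hasDerivAt_Phi w X (piL w (MvPolynomial.X j)) t)
  have hz : Mc w X (piL w (MvPolynomial.X j)) = piL w (X j) := by
    rw [Mc_pi w X (hom_bdd w hw (X_hom w j) (wle w j)), DL_X X j]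
  rw [hz] at h
  exact h

lemma eval_sol_monomial (hw : ∀ i, 1 ≤ w i) (hX : IsWHomVF' w X) (x0 : Fin n → ℝ) :
    ∀ m : ℕ, ∀ α : Fin n →₀ ℕ, Finsupp.weight w α = m → m ≤ B w → ∀ t : ℝ,
      MvPolynomial.eval x0 (sol w X (monomial α 1) t)
        = α.prod fun i e => (fsol w X x0 t i) ^ e := by
  intro m
  induction m using Nat.strong_induction_on with
  | _ m IH =>
    intro α hα hm t
    by_cases h0 : α = 0
    · subst h0
      have h1 : (monomial (0 : Fin n →₀ ℕ) (1 : ℝ)) = 1 := by simp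
      rw [h1, sol_one, map_one]
      simp
    · obtain ⟨k, hk⟩ := (Finsupp.support_nonempty_iff.2 h0)
      have hk0 : α k ≠ 0 := Finsupp.mem_support_iff.1 hk
      have hXk : (MvPolynomial.X k : MvPolynomial (Fin n) ℝ)
          = monomial (Finsupp.single k 1) 1 := rfl
      have hsum : Finsupp.weight w (α - Finsupp.single k 1) + w k = m := by
        have h := congrArg (Finsupp.weight w) (sub_add_single (α := α) hk0)
        rw [map_add, weight_single_nat] at h
        rw [h, hα]
      have hwk : 1 ≤ w k := hw k
      have hsplit : monomial α (1 : ℝ)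
          = MvPolynomial.X k * monomial (α - Finsupp.single k 1) 1 := by
        rw [hXk, monomial_mul, one_mul]
        exact congrArg (fun β => (monomial β (1 : ℝ)))
          (by rw [add_comm]; exact (sub_add_single (α := α) hk0).symm)
      have hmon : IsWeightedHomogeneous w
          (monomial (α - Finsupp.single k 1) (1 : ℝ))
          (Finsupp.weight w (α - Finsupp.single k 1)) :=
        isWeightedHomogeneous_monomial _ _ _ rfl
      have hdeg : w k + Finsupp.weight w (α - Finsupp.single k 1) ≤ B w := by omega
      rw [hsplit, sol_mul w X hw hX (X_hom w k) hmon hdeg, map_mul]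
      have hIH := IH (Finsupp.weight w (α - Finsupp.single k 1)) (by omega)
        (α - Finsupp.single k 1) rfl (by omega) t
      rw [hIH]
      have hfk : MvPolynomial.eval x0 (sol w X (MvPolynomial.X k) t) = fsol w X x0 t k := rfl
      rw [hfk]
      conv_rhs => rw [← sub_add_single (α := α) hk0]
      rw [Finsupp.prod_add_index' (fun a => pow_zero _) (fun a b c => pow_add _ _ _)]
      have hps : ((Finsupp.single k 1).prod fun i e => fsol w X x0 t i ^ e)
          = fsol w X x0 t k := by
        simp
      rw [hps]
      ring

lemma eval_sol_X (hw : ∀ i, 1 ≤ w i) (hX : IsWHomVF' w X) (x0 : Fin n → ℝ) (t : ℝ) (j : Fin n) :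
    MvPolynomial.eval x0 (sol w X (X j) t)
      = MvPolynomial.eval (fun i => fsol w X x0 t i) (X j) := by
  have hXj : IsWeightedHomogeneous w (X j) (w j) := hom_cast w (hX j)
  conv_lhs => rw [as_sum (X j)]
  conv_rhs => rw [as_sum (X j)]
  have hsol : sol w X (∑ α ∈ (X j).support, monomial α (coeff α (X j))) t
      = ∑ α ∈ (X j).support, sol w X (monomial α (coeff α (X j))) t := by
    rw [sol, map_sum (piL w) _ (X j).support, map_sum (Phi w X t) _ _,
      map_sum (iota w) _ _]
    rfl
  rw [hsol, map_sum, map_sum]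
  refine Finset.sum_congr rfl fun α hα => ?_
  have hc : monomial α (coeff α (X j)) = coeff α (X j) • monomial α (1 : ℝ) := by
    rw [smul_monomial, smul_eq_mul, mul_one]
  have hsm : sol w X (monomial α (coeff α (X j))) t
      = coeff α (X j) • sol w X (monomial α (1 : ℝ)) t := by
    rw [hc]
    simp [sol, map_smul]
  rw [hsm, smul_eval,
    eval_sol_monomial w X hw hX x0 (w j) α (hXj (MvPolynomial.mem_support_iff.1 hα))
      (wle w j) t,
    eval_monomial]

end Final

end Stmt7

/-- A weighted-homogeneous polynomial vector field of nonholonomic degree `0`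
(for positive weights) is complete: every initial value problem has a global
solution defined on all of ℝ. -/
theorem stmt_7 {n : ℕ} (w : Fin n → ℕ) (hw : ∀ i, 1 ≤ w i)
    (X : Fin n → MvPolynomial (Fin n) ℝ) (hX : IsWHomVF w 0 X) :
    ∀ x0 : Fin n → ℝ, ∃ f : ℝ → (Fin n → ℝ), f 0 = x0 ∧
      ∀ t : ℝ, HasDerivAt f (fun j => MvPolynomial.eval (f t) (X j)) t := by
  intro x0
  have hX' : Stmt7.IsWHomVF' w X := fun j => by
    have h := hX j
    simpa using h
  refine ⟨fun t j => Stmt7.fsol w X x0 t j, ?_, ?_⟩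
  · funext j
    show MvPolynomial.eval x0 (Stmt7.sol w X (MvPolynomial.X j) 0) = x0 j
    rw [Stmt7.sol_zero w X (Stmt7.hom_bdd w hw (Stmt7.X_hom w j) (Stmt7.wle w j))]
    simp
  · intro t
    rw [hasDerivAt_pi]
    intro j
    have h := Stmt7.hasDerivAt_fsol w X hw x0 t j
    rw [Stmt7.eval_sol_X w X hw hX' x0 t j] at h
    exact h
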